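/- (Strict total positivity of the exponential kernel, classical case m = 1.) Let n be a positive integer and let x_1 > x_2 > ⋯ > x_n and y_1 > y_2 > ⋯ > y_n be real numbers. Then the n×n determinant det( exp(x_i y_j) )_{1≤i,j≤n} is strictly positive. -/

import Mathlib

open scoped BigOperators Nat

/-- Linear independence of exponentials: if a linear combination of `n` exponentials
with pairwise distinct (strictly decreasing) frequencies vanishes at `n` distinct points,
then all coefficients vanish. -/
lemma exp_lin_indep : ∀ (n : ℕ) (y : Fin n → ℝ), StrictAnti y → ∀ (c : Fin n → ℝ)
    (t : Fin n → ℝ), StrictMono t →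
    (∀ i, ∑ j, c j * Real.exp (y j * t i) = 0) → ∀ j, c j = 0 := by
  intro n
  induction n with
  | zero => exact fun _ _ _ _ _ _ j => j.elim0
  | succ n ih =>
    intro y hy c t ht hz
    set z : Fin (n + 1) → ℝ := fun j => y j - y (Fin.last n) with hzdef
    set g : ℝ → ℝ := fun s => ∑ j, c j * Real.exp (z j * s) with hgdef
    set g' : ℝ → ℝ := fun s => ∑ j, (c j * z j) * Real.exp (z j * s) with hg'def
    have hderiv : ∀ s, HasDerivAt g (g' s) s := by
      intro s
      have hterm : ∀ j : Fin (n + 1), HasDerivAt (fun s => c j * Real.exp (z j * s))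
          ((c j * z j) * Real.exp (z j * s)) s := by
        intro j
        have h1 : HasDerivAt (fun s : ℝ => z j * s) (z j) s := by
          simpa using (hasDerivAt_id s).const_mul (z j)
        have h3 := (h1.exp).const_mul (c j)
        refine h3.congr_deriv ?_
        ring
      simpa [hgdef, hg'def] using HasDerivAt.fun_sum (fun j (_ : j ∈ Finset.univ) => hterm j)
    have hgz : ∀ i, g (t i) = 0 := by
      intro i
      have hrw : g (t i) = (∑ j, c j * Real.exp (y j * t i)) / Real.exp (y (Fin.last n) * t i) := by
        rw [hgdef, Finset.sum_div]
        refine Finset.sum_congr rfl fun j _ => ?_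
        rw [mul_div_assoc, ← Real.exp_sub, ← sub_mul]
      rw [hrw, hz i, zero_div]
    -- Rolle's theorem between consecutive zeros
    have hr : ∀ i : Fin n, ∃ u ∈ Set.Ioo (t i.castSucc) (t i.succ), g' u = 0 := by
      intro i
      have hlt : t i.castSucc < t i.succ := ht (Fin.castSucc_lt_succ (i := i))
      exact exists_hasDerivAt_eq_zero hlt
        (fun s _ => (hderiv s).continuousAt.continuousWithinAt)
        (by rw [hgz, hgz]) (fun s _ => hderiv s)
    choose u hu hgu using hr
    have hu_mono : StrictMono u := by
      intro i j hij
      have h1 : u i < t i.succ := (hu i).2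
      have h2 : t j.castSucc < u j := (hu j).1
      have h3 : t i.succ ≤ t j.castSucc := by
        apply ht.monotone
        rw [Fin.le_def]
        simp only [Fin.val_succ, Fin.coe_castSucc]
        exact Fin.lt_def.mp hij
      linarith
    have hz' : StrictAnti fun j : Fin n => z j.castSucc := by
      intro a b hab
      have := hy (Fin.castSucc_lt_castSucc_iff.mpr hab)
      simp only [hzdef]
      linarith
    have hsum : ∀ i, ∑ j : Fin n,
        (c j.castSucc * z j.castSucc) * Real.exp (z j.castSucc * u i) = 0 := by
      intro i
      have h := hgu i
      simp only [hg'def] at h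
      rw [Fin.sum_univ_castSucc] at h
      have hzl : z (Fin.last n) = 0 := by simp [hzdef]
      rw [hzl] at h
      simpa using h
    have hc : ∀ j : Fin n, c j.castSucc = 0 := by
      intro j
      have h0 := ih (fun j => z j.castSucc) hz'
        (fun j => c j.castSucc * z j.castSucc) u hu_mono hsum j
      have hne : z j.castSucc ≠ 0 := by
        have := hy (Fin.castSucc_lt_last j)
        simp only [hzdef]
        intro h; rw [sub_eq_zero] at h; exact absurd h (ne_of_gt this)
      rcases mul_eq_zero.mp h0 with h | h
      · exact h
      · exact absurd h hne
    have hlast : c (Fin.last n) = 0 := by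
      have h := hz (Fin.last n)
      rw [Fin.sum_univ_castSucc] at h
      have hzero : ∀ j : Fin n, c j.castSucc * Real.exp (y j.castSucc * t (Fin.last n)) = 0 := by
        intro j; rw [hc j, zero_mul]
      rw [Finset.sum_congr rfl (fun j _ => hzero j), Finset.sum_const_zero, zero_add] at h
      rcases mul_eq_zero.mp h with h | h
      · exact h
      · exact absurd h (Real.exp_ne_zero _)
    intro j
    rcases Fin.eq_castSucc_or_eq_last j with ⟨j', rfl⟩ | rfl
    · exact hc j'
    · exact hlast

/-- The exponential kernel matrix has nonzero determinant. -/
lemma det_exp_ne_zero (n : ℕ) (x y : Fin n → ℝ) (hx : StrictAnti x) (hy : StrictAnti y) :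
    Matrix.det (Matrix.of fun i j : Fin n => Real.exp (x i * y j)) ≠ 0 := by
  intro h
  obtain ⟨v, hv0, hv⟩ := Matrix.exists_mulVec_eq_zero_iff.mpr h
  apply hv0
  funext j
  refine exp_lin_indep n y hy v (fun i => x (Fin.rev i)) ?_ ?_ j
  · intro a b hab
    exact hx (Fin.rev_lt_rev.mpr hab)
  · intro i
    have h2 := congrFun hv (Fin.rev i)
    simp only [Matrix.mulVec, dotProduct, Matrix.of_apply, Pi.zero_apply] at h2
    rw [← h2]
    exact Finset.sum_congr rfl fun j _ => by rw [mul_comm (y j)]; ring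

/-- The symmetric exponential kernel matrix is positive definite. -/
lemma posDef_exp (n : ℕ) (x : Fin n → ℝ) (hx : Function.Injective x) :
    (Matrix.of fun i j : Fin n => Real.exp (x i * x j)).PosDef := by
  refine Matrix.PosDef.of_dotProduct_mulVec_pos ?_ ?_
  · ext i j
    simp [Matrix.conjTranspose_apply, mul_comm]
  · intro c hc0
    have hexp : ∀ a : ℝ, HasSum (fun k : ℕ => a ^ k / k !) (Real.exp a) := by
      intro a
      rw [Real.exp_eq_exp_ℝ]
      exact NormedSpace.expSeries_div_hasSum_exp a
    have hpair : ∀ p : Fin n × Fin n, HasSum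
        (fun k : ℕ => (c p.1 * c p.2) * ((x p.1 * x p.2) ^ k / k !))
        (c p.1 * c p.2 * Real.exp (x p.1 * x p.2)) :=
      fun p => (hexp _).mul_left _
    have hsum0 := hasSum_sum (s := (Finset.univ : Finset (Fin n × Fin n)))
      (fun p _ => hpair p)
    have hterm : ∀ k : ℕ, (∑ p : Fin n × Fin n,
        (c p.1 * c p.2) * ((x p.1 * x p.2) ^ k / k !))
        = (∑ i, c i * x i ^ k) ^ 2 / k ! := by
      intro k
      rw [sq, Finset.sum_mul_sum, Finset.sum_div, ← Finset.univ_product_univ,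
        Finset.sum_product]
      refine Finset.sum_congr rfl fun i _ => ?_
      rw [Finset.sum_div]
      refine Finset.sum_congr rfl fun j _ => ?_
      rw [mul_pow]
      ring
    have htot : (∑ p : Fin n × Fin n, c p.1 * c p.2 * Real.exp (x p.1 * x p.2))
        = dotProduct (star c)
          (Matrix.mulVec (Matrix.of fun i j : Fin n => Real.exp (x i * x j)) c) := by
      simp only [dotProduct, Matrix.mulVec, Pi.star_apply, star_trivial,
        Matrix.of_apply, Finset.mul_sum]
      rw [← Finset.univ_product_univ, Finset.sum_product]
      exact Finset.sum_congr rfl fun i _ => Finset.sum_congr rfl fun j _ => by ring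
    have hs : HasSum (fun k : ℕ => (∑ i, c i * x i ^ k) ^ 2 / k !)
        (dotProduct (star c)
          (Matrix.mulVec (Matrix.of fun i j : Fin n => Real.exp (x i * x j)) c)) := by
      rw [← htot]
      exact hsum0.congr_fun fun k => (hterm k).symm ▸ rfl
    have hk : ∃ k : ℕ, (∑ i, c i * x i ^ k) ≠ 0 := by
      by_contra h
      push_neg at h
      apply hc0
      have hdet : (Matrix.vandermonde x).det ≠ 0 :=
        Matrix.det_vandermonde_ne_zero_iff.mpr hx
      apply Matrix.eq_zero_of_vecMul_eq_zero hdet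
      funext k
      simpa [Matrix.vecMul, dotProduct, Matrix.vandermonde] using h k
    obtain ⟨k0, hk0⟩ := hk
    have hpos : 0 < (∑ i, c i * x i ^ k0) ^ 2 / (k0 ! : ℝ) := by
      apply div_pos
      · exact lt_of_le_of_ne (sq_nonneg _) (Ne.symm (pow_ne_zero 2 hk0))
      · exact_mod_cast Nat.factorial_pos k0
    have hnn : ∀ k : ℕ, 0 ≤ (∑ i, c i * x i ^ k) ^ 2 / (k ! : ℝ) := by
      intro k
      apply div_nonneg (sq_nonneg _)
      exact_mod_cast (Nat.factorial_pos k).le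
    have := Summable.tsum_pos hs.summable hnn k0 hpos
    rwa [hs.tsum_eq] at this

/-- Strict total positivity of the exponential kernel, classical case: for strictly
decreasing `x` and `y`, the determinant `det(exp(x_i y_j))` is strictly positive. -/
theorem det_exp_kernel_pos (n : ℕ) (hn : 0 < n) (x y : Fin n → ℝ)
    (hx : StrictAnti x) (hy : StrictAnti y) :
    0 < Matrix.det (Matrix.of fun i j : Fin n => Real.exp (x i * y j)) := by
  set f : ℝ → ℝ := fun s =>
    Matrix.det (Matrix.of fun i j : Fin n => Real.exp (x i * ((1 - s) * y j + s * x j)))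
    with hf
  have hcont : Continuous f := by
    apply Continuous.matrix_det
    apply continuous_matrix
    intro i j
    simp only [Matrix.of_apply]
    fun_prop
  have hne : ∀ s ∈ Set.Icc (0 : ℝ) 1, f s ≠ 0 := by
    intro s hs
    apply det_exp_ne_zero n x _ hx
    intro a b hab
    rcases lt_or_eq_of_le hs.2 with h1 | h1
    · have ha := mul_lt_mul_of_pos_left (hy hab) (by linarith : (0 : ℝ) < 1 - s)
      have hb := mul_le_mul_of_nonneg_left (hx hab).le hs.1
      dsimp only
      linarith
    · subst h1
      simpa using hx hab
  have hf1 : 0 < f 1 := by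
    have h := (posDef_exp n x hx.injective).det_pos
    have h1 : f 1 = Matrix.det (Matrix.of fun i j : Fin n => Real.exp (x i * x j)) := by
      simp [hf]
    rwa [h1]
  have key : 0 < f 0 := by
    by_contra hle
    push_neg at hle
    have hne0 := hne 0 (by norm_num)
    have hlt : f 0 < 0 := lt_of_le_of_ne hle hne0
    obtain ⟨s, hsmem, hfs⟩ := intermediate_value_Icc (by norm_num : (0 : ℝ) ≤ 1)
      hcont.continuousOn (⟨hlt.le, hf1.le⟩ : (0 : ℝ) ∈ Set.Icc (f 0) (f 1))
    exact hne s hsmem hfs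
  have h0 : f 0 = Matrix.det (Matrix.of fun i j : Fin n => Real.exp (x i * y j)) := by
    simp [hf]
  rwa [h0] at key
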